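/- The norm of the Schur multiplier S_A on M₂(ℂ), where A has entries a₁₁ = a₁₂ = a₂₂ = 1, a₂₁ = 0, equals sup over θ ∈ ℝ of the operator norm of the matrix [[cos θ, sin θ],[0, cos θ]]. -/

import Mathlib

open scoped Matrix.Norms.L2Operator

open Matrix Real

namespace SchurAux2x2

lemma quad (α β δ p q : ℝ) (hα : 0 ≤ α) (hδ : 0 ≤ δ)
    (h1 : α ^ 2 + β ^ 2 ≤ 1) (h2 : β ^ 2 + δ ^ 2 ≤ 1) :
    (α * p + β * q) ^ 2 + δ ^ 2 * q ^ 2 ≤ 4 / 3 * (p ^ 2 + q ^ 2) := by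
  have hdet : α ^ 2 * β ^ 2 ≤ (4 / 3 - α ^ 2) * (4 / 3 - β ^ 2 - δ ^ 2) := by
    rcases le_total α δ with h | h
    · nlinarith [sq_nonneg (3 * α * δ - 2), mul_le_mul_of_nonneg_left h hα]
    · nlinarith [sq_nonneg (3 * α * δ - 2), mul_le_mul_of_nonneg_left h hδ]
  have hA0 : (1 : ℝ) / 3 ≤ 4 / 3 - α ^ 2 := by nlinarith [sq_nonneg β]
  nlinarith [sq_nonneg ((4 / 3 - α ^ 2) * p - α * β * q),
    mul_nonneg (sub_nonneg.2 hdet) (sq_nonneg q), hA0]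

lemma cquad (a b d x y : ℂ) (h1 : ‖a‖ ^ 2 + ‖b‖ ^ 2 ≤ 1) (h2 : ‖b‖ ^ 2 + ‖d‖ ^ 2 ≤ 1) :
    ‖a * x + b * y‖ ^ 2 + ‖d * y‖ ^ 2 ≤ 4 / 3 * (‖x‖ ^ 2 + ‖y‖ ^ 2) := by
  have hq := quad ‖a‖ ‖b‖ ‖d‖ ‖x‖ ‖y‖ (norm_nonneg a) (norm_nonneg d) h1 h2
  have h3 : ‖a * x + b * y‖ ≤ ‖a‖ * ‖x‖ + ‖b‖ * ‖y‖ :=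
    (norm_add_le _ _).trans (by rw [norm_mul, norm_mul])
  have h4 : ‖a * x + b * y‖ ^ 2 ≤ (‖a‖ * ‖x‖ + ‖b‖ * ‖y‖) ^ 2 := by
    nlinarith [norm_nonneg (a * x + b * y)]
  have h5 : ‖d * y‖ ^ 2 = ‖d‖ ^ 2 * ‖y‖ ^ 2 := by rw [norm_mul]; ring
  linarith

lemma enorm_sq (v : Fin 2 → ℂ) :
    ‖(WithLp.equiv 2 (Fin 2 → ℂ)).symm v‖ ^ 2 = ‖v 0‖ ^ 2 + ‖v 1‖ ^ 2 := by
  rw [EuclideanSpace.norm_eq, Real.sq_sqrt (by positivity)]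
  simp [Fin.sum_univ_two]

lemma eq_of_sq {x c : ℝ} (hx : 0 ≤ x) (hc : 0 ≤ c) (h : x ^ 2 = c ^ 2) : x = c := by
  calc x = Real.sqrt (x ^ 2) := (Real.sqrt_sq hx).symm
    _ = Real.sqrt (c ^ 2) := by rw [h]
    _ = c := Real.sqrt_sq hc

lemma le_of_sq (x y : ℝ) (hx : 0 ≤ x) (hy : 0 ≤ y) (h : x ^ 2 ≤ y ^ 2) : x ≤ y := by
  nlinarith

lemma opNorm_le (A : Matrix (Fin 2) (Fin 2) ℂ) {c : ℝ} (hc : 0 ≤ c)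
    (h : ∀ v : Fin 2 → ℂ, ‖(WithLp.equiv 2 (Fin 2 → ℂ)).symm (A *ᵥ v)‖ ≤
      c * ‖(WithLp.equiv 2 (Fin 2 → ℂ)).symm v‖) :
    ‖A‖ ≤ c := by
  rw [Matrix.l2_opNorm_def]
  refine ContinuousLinearMap.opNorm_le_bound _ hc fun x => ?_
  simpa [Matrix.toEuclideanLin_apply] using h ((WithLp.equiv 2 (Fin 2 → ℂ)) x)

lemma opNorm_mulVec_le (A : Matrix (Fin 2) (Fin 2) ℂ) (v : Fin 2 → ℂ) :
    ‖(WithLp.equiv 2 (Fin 2 → ℂ)).symm (A *ᵥ v)‖ ≤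
      ‖A‖ * ‖(WithLp.equiv 2 (Fin 2 → ℂ)).symm v‖ :=
  Matrix.l2_opNorm_mulVec A ((WithLp.equiv 2 (Fin 2 → ℂ)).symm v)

/-- The main upper bound: `‖A ∘ X‖ ≤ 2/√3` when `‖X‖ ≤ 1`. -/
lemma key (X : Matrix (Fin 2) (Fin 2) ℂ) (hX : ‖X‖ ≤ 1) :
    ‖Matrix.hadamard (!![1, 1; 0, 1] : Matrix (Fin 2) (Fin 2) ℂ) X‖ ≤ 2 / Real.sqrt 3 := by
  have hc : (0 : ℝ) ≤ 2 / Real.sqrt 3 := by positivity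
  have hn1 : ‖(WithLp.equiv 2 (Fin 2 → ℂ)).symm ![(1 : ℂ), 0]‖ = 1 := by
    refine eq_of_sq (norm_nonneg _) one_pos.le ?_
    rw [enorm_sq]; norm_num
  have hn2 : ‖(WithLp.equiv 2 (Fin 2 → ℂ)).symm ![(0 : ℂ), 1]‖ = 1 := by
    refine eq_of_sq (norm_nonneg _) one_pos.le ?_
    rw [enorm_sq]; norm_num
  -- row 1 bound
  have hrow : ‖X 0 0‖ ^ 2 + ‖X 0 1‖ ^ 2 ≤ 1 := by
    have h1 := opNorm_mulVec_le Xᴴ ![1, 0]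
    have he : Xᴴ *ᵥ ![(1 : ℂ), 0] = ![(starRingEnd ℂ) (X 0 0), (starRingEnd ℂ) (X 0 1)] := by
      funext i
      fin_cases i <;>
        simp [Matrix.mulVec, dotProduct, Fin.sum_univ_two, Matrix.conjTranspose_apply]
    rw [Matrix.l2_opNorm_conjTranspose, he, hn1, mul_one] at h1
    have h2 := enorm_sq ![(starRingEnd ℂ) (X 0 0), (starRingEnd ℂ) (X 0 1)]
    have h3 : ‖(starRingEnd ℂ) (X 0 0)‖ = ‖X 0 0‖ := RCLike.norm_conj _
    have h4 : ‖(starRingEnd ℂ) (X 0 1)‖ = ‖X 0 1‖ := RCLike.norm_conj _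
    simp only [Matrix.cons_val_zero, Matrix.cons_val_one, Matrix.head_cons, h3, h4] at h2
    nlinarith [norm_nonneg ((WithLp.equiv 2 (Fin 2 → ℂ)).symm
      ![(starRingEnd ℂ) (X 0 0), (starRingEnd ℂ) (X 0 1)])]
  -- column 2 bound
  have hcol : ‖X 0 1‖ ^ 2 + ‖X 1 1‖ ^ 2 ≤ 1 := by
    have h1 := opNorm_mulVec_le X ![0, 1]
    have he : X *ᵥ ![(0 : ℂ), 1] = ![X 0 1, X 1 1] := by
      funext i
      fin_cases i <;> simp [Matrix.mulVec, dotProduct, Fin.sum_univ_two]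
    rw [he, hn2, mul_one] at h1
    have h2 := enorm_sq ![X 0 1, X 1 1]
    simp only [Matrix.cons_val_zero, Matrix.cons_val_one, Matrix.head_cons] at h2
    nlinarith [norm_nonneg ((WithLp.equiv 2 (Fin 2 → ℂ)).symm ![X 0 1, X 1 1])]
  refine opNorm_le _ hc fun v => ?_
  have hmv : Matrix.hadamard (!![1, 1; 0, 1] : Matrix (Fin 2) (Fin 2) ℂ) X *ᵥ v
      = ![X 0 0 * v 0 + X 0 1 * v 1, X 1 1 * v 1] := by
    funext i
    fin_cases i <;>
      simp [Matrix.mulVec, dotProduct, Fin.sum_univ_two, Matrix.hadamard_apply]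
  rw [hmv]
  have hL := enorm_sq ![X 0 0 * v 0 + X 0 1 * v 1, X 1 1 * v 1]
  have hR := enorm_sq v
  have hq := cquad (X 0 0) (X 0 1) (X 1 1) (v 0) (v 1) hrow hcol
  refine le_of_sq _ _ (norm_nonneg _) (by positivity) ?_
  have hc2 : (2 / Real.sqrt 3) ^ 2 = 4 / 3 := by
    rw [div_pow, Real.sq_sqrt (by norm_num : (0:ℝ) ≤ 3)]
    norm_num
  rw [mul_pow, hc2, hR, hL]
  simpa using hq

noncomputable def R (θ : ℝ) : Matrix (Fin 2) (Fin 2) ℂ :=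
  !![(Real.cos θ : ℂ), (Real.sin θ : ℂ); -(Real.sin θ : ℂ), (Real.cos θ : ℂ)]

noncomputable def M (θ : ℝ) : Matrix (Fin 2) (Fin 2) ℂ :=
  !![(Real.cos θ : ℂ), (Real.sin θ : ℂ); 0, (Real.cos θ : ℂ)]

lemma combo (c s : ℝ) (x y : ℂ) :
    ‖(c : ℂ) * x + (s : ℂ) * y‖ ^ 2 + ‖-((s : ℂ) * x) + (c : ℂ) * y‖ ^ 2
      = (c ^ 2 + s ^ 2) * (‖x‖ ^ 2 + ‖y‖ ^ 2) := by
  simp only [Complex.sq_norm, Complex.normSq_apply, Complex.add_re,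
    Complex.add_im, Complex.neg_re, Complex.neg_im, Complex.mul_re, Complex.mul_im,
    Complex.ofReal_re, Complex.ofReal_im]
  ring

lemma rot_le (θ : ℝ) : ‖R θ‖ ≤ 1 := by
  refine opNorm_le _ one_pos.le fun v => ?_
  rw [one_mul]
  refine le_of_sq _ _ (norm_nonneg _) (norm_nonneg _) ?_
  have h0 : (R θ *ᵥ v) 0 = (Real.cos θ : ℂ) * v 0 + (Real.sin θ : ℂ) * v 1 := by
    simp [R, Matrix.mulVec, dotProduct, Fin.sum_univ_two]
  have h1 : (R θ *ᵥ v) 1 = -((Real.sin θ : ℂ) * v 0) + (Real.cos θ : ℂ) * v 1 := by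
    simp [R, Matrix.mulVec, dotProduct, Fin.sum_univ_two]
  rw [enorm_sq, enorm_sq, h0, h1, combo, Real.cos_sq_add_sin_sq, one_mul]

lemma hAR (θ : ℝ) :
    Matrix.hadamard (!![1, 1; 0, 1] : Matrix (Fin 2) (Fin 2) ℂ) (R θ) = M θ := by
  ext i j
  fin_cases i <;> fin_cases j <;> simp [R, M, Matrix.hadamard_apply]

lemma hlow : 2 / Real.sqrt 3 ≤ ‖M (Real.arcsin (Real.sqrt (1 / 3)))‖ := by
  set θ := Real.arcsin (Real.sqrt (1 / 3)) with hθ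
  have hs : Real.sin θ = Real.sqrt (1 / 3) :=
    Real.sin_arcsin (le_trans (by norm_num) (Real.sqrt_nonneg _)) (by
      rw [show (1 : ℝ) = Real.sqrt 1 by simp]
      exact Real.sqrt_le_sqrt (by norm_num))
  have hc : Real.cos θ = Real.sqrt (2 / 3) := by
    rw [hθ, Real.cos_arcsin, Real.sq_sqrt (by norm_num : (0:ℝ) ≤ 1 / 3)]
    norm_num
  have h1 := opNorm_mulVec_le (M θ) ![1, ((Real.sqrt 2 : ℝ) : ℂ)]
  have e1 : Real.sqrt (1 / 3) * Real.sqrt 2 = Real.sqrt (2 / 3) := by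
    rw [← Real.sqrt_mul (by norm_num : (0:ℝ) ≤ 1 / 3)]
    norm_num
  have h0 : (M θ *ᵥ ![1, ((Real.sqrt 2 : ℝ) : ℂ)]) 0
      = ((Real.sqrt (2 / 3) * 2 : ℝ) : ℂ) := by
    simp [M, Matrix.mulVec, dotProduct, Fin.sum_univ_two, hs, hc]
    push_cast [← e1]
    ring
  have h2 : (M θ *ᵥ ![1, ((Real.sqrt 2 : ℝ) : ℂ)]) 1
      = ((Real.sqrt (2 / 3) * Real.sqrt 2 : ℝ) : ℂ) := by
    simp [M, Matrix.mulVec, dotProduct, Fin.sum_univ_two, hc]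
  have hnum : ‖(WithLp.equiv 2 (Fin 2 → ℂ)).symm (M θ *ᵥ ![1, ((Real.sqrt 2 : ℝ) : ℂ)])‖ = 2 := by
    refine eq_of_sq (norm_nonneg _) (by norm_num) ?_
    rw [enorm_sq, h0, h2]
    rw [Complex.norm_real, Complex.norm_real, Real.norm_eq_abs, Real.norm_eq_abs,
      abs_of_nonneg (by positivity), abs_of_nonneg (by positivity)]
    have e2 : Real.sqrt (2 / 3) ^ 2 = 2 / 3 := Real.sq_sqrt (by norm_num)
    have e3 : Real.sqrt 2 ^ 2 = 2 := Real.sq_sqrt (by norm_num)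
    nlinarith [e2, e3]
  have hden : ‖(WithLp.equiv 2 (Fin 2 → ℂ)).symm ![(1 : ℂ), ((Real.sqrt 2 : ℝ) : ℂ)]‖
      = Real.sqrt 3 := by
    refine eq_of_sq (norm_nonneg _) (Real.sqrt_nonneg _) ?_
    rw [enorm_sq]
    simp [Complex.norm_real, abs_of_nonneg (Real.sqrt_nonneg 2),
      Real.sq_sqrt (by norm_num : (0:ℝ) ≤ 2), Real.sq_sqrt (by norm_num : (0:ℝ) ≤ 3)]
    norm_num
  rw [hnum, hden] at h1
  rw [div_le_iff₀ (Real.sqrt_pos.2 (by norm_num))]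
  exact h1


end SchurAux2x2

open SchurAux2x2 in
/-- The norm of the Schur multiplier `S_A` on `M₂(ℂ)`, where `A = !![1,1;0,1]`,
equals the supremum over `θ ∈ ℝ` of the operator norm of `[[cos θ, sin θ],[0, cos θ]]`. -/
theorem schur_multiplier_norm_eq_sup_rotations :
    sSup {c : ℝ | ∃ X : Matrix (Fin 2) (Fin 2) ℂ, ‖X‖ ≤ 1 ∧
        c = ‖Matrix.hadamard (!![1, 1; 0, 1] : Matrix (Fin 2) (Fin 2) ℂ) X‖} =
      ⨆ θ : ℝ, ‖(!![(Real.cos θ : ℂ), (Real.sin θ : ℂ); 0, (Real.cos θ : ℂ)] :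
          Matrix (Fin 2) (Fin 2) ℂ)‖ := by
  show sSup {c : ℝ | ∃ X : Matrix (Fin 2) (Fin 2) ℂ, ‖X‖ ≤ 1 ∧
      c = ‖Matrix.hadamard (!![1, 1; 0, 1] : Matrix (Fin 2) (Fin 2) ℂ) X‖} = ⨆ θ : ℝ, ‖M θ‖
  set S := {c : ℝ | ∃ X : Matrix (Fin 2) (Fin 2) ℂ, ‖X‖ ≤ 1 ∧
      c = ‖Matrix.hadamard (!![1, 1; 0, 1] : Matrix (Fin 2) (Fin 2) ℂ) X‖} with hS
  have hub : ∀ c ∈ S, c ≤ 2 / Real.sqrt 3 := by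
    rintro c ⟨X, hX, rfl⟩
    exact key X hX
  have hmem : ∀ θ : ℝ, ‖M θ‖ ∈ S := fun θ => ⟨R θ, rot_le θ, by rw [hAR]⟩
  have hne : S.Nonempty := ⟨_, hmem 0⟩
  have hbddS : BddAbove S := ⟨_, fun c hc => hub c hc⟩
  have hbddR : BddAbove (Set.range fun θ : ℝ => ‖M θ‖) := by
    refine ⟨2 / Real.sqrt 3, ?_⟩
    rintro _ ⟨θ, rfl⟩
    exact hub _ (hmem θ)
  refine le_antisymm ?_ (ciSup_le fun θ => le_csSup hbddS (hmem θ))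
  exact (csSup_le hne hub).trans (le_ciSup_of_le hbddR _ hlow)
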